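/- Suppose ᵗΘ has an infinite best approximation sequence (y_ν) with Y_ν = max_j |y_{ν,j}| and ζ_ν = max_i ‖ᵗL_i(y_ν)‖. Let η ∈ ℝ^n and ε > 0 satisfy ‖η_1 y_{ν,1} + ... + η_n y_{ν,n}‖ ≥ ε for all ν. Let δ > 0, let r₀ ∈ (0,1) be the maximizer of r^n(1−r)^m on (0,1), and set R₀ = n·δ^{1/n}/(ε·r₀). Suppose x ∈ ℤ^m with X = max_{1≤i≤m} |x_i| satisfies (R₀·Y_ν)^{n/m} ≤ X < (R₀·Y_{ν+1})^{n/m} for some index ν, and max_{1≤j≤n} ‖L_j(x) − η_j‖ ≤ (δ/X^m)^{1/n}. Then ζ_ν^m · Y_{ν+1}^n ≥ ε^d · r₀^n · (1−r₀)^m / (m^m · n^n · δ). -/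

import Mathlib

open Filter MeasureTheory

/-- Distance from a real number `t` to the nearest integer, `‖t‖`. -/
noncomputable def distInt (t : ℝ) : ℝ := |t - round t|

/-- The system of linear forms `L_j(x) = ∑_i Θ_j^i x_i` attached to a matrix. -/
noncomputable def lform {m n : ℕ} (Θ : Matrix (Fin n) (Fin m) ℝ) (x : Fin m → ℤ) (j : Fin n) :
    ℝ := ∑ i, Θ j i * (x i : ℝ)

/-- Sup-norm `max_i |x_i|` of an integer vector, as a real number. -/
noncomputable def supAbs {k : ℕ} (x : Fin k → ℤ) : ℝ := ⨆ i, |(x i : ℝ)|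

/-- `ψ^Θ(t)`: the minimum of `max_j ‖L_j(x)‖` over nonzero integer `x` with `max_i |x_i| ≤ t`. -/
noncomputable def psi {m n : ℕ} (Θ : Matrix (Fin n) (Fin m) ℝ) (t : ℝ) : ℝ :=
  sInf { v | ∃ x : Fin m → ℤ, x ≠ 0 ∧ supAbs x ≤ t ∧ v = ⨆ j, distInt (lform Θ x j) }

/-- `ψ^{Θ,α}(t)`: the inhomogeneous analogue of `ψ^Θ(t)`. -/
noncomputable def psiA {m n : ℕ} (Θ : Matrix (Fin n) (Fin m) ℝ) (α : Fin n → ℝ) (t : ℝ) : ℝ :=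
  sInf { v | ∃ x : Fin m → ℤ, x ≠ 0 ∧ supAbs x ≤ t ∧ v = ⨆ j, distInt (lform Θ x j - α j) }

/-- `Θ` is singular: `limsup_{t→∞} t^{m/n} ψ^Θ(t) = 0`. -/
noncomputable def IsSingular {m n : ℕ} (Θ : Matrix (Fin n) (Fin m) ℝ) : Prop :=
  Filter.limsup (fun t : ℝ => ENNReal.ofReal (t ^ ((m : ℝ) / (n : ℝ)) * psi Θ t))
    Filter.atTop = 0

/-- Property (1) (Khintchine's Chebyshev property). -/
def Chebyshev1 {m n : ℕ} (Θ : Matrix (Fin n) (Fin m) ℝ) : Prop :=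
  ∀ α : Fin n → ℝ, ∃ Γ : ℝ, 0 < Γ ∧ ∀ T : ℝ, ∃ x : Fin m → ℤ,
    T ≤ supAbs x ∧
      (⨆ j, distInt (lform Θ x j - α j)) < Γ * (supAbs x) ^ (-(m : ℝ) / (n : ℝ))

/-- Property (2) (Cassels' version, with `Γ` uniform in `α`). -/
def Chebyshev2 {m n : ℕ} (Θ : Matrix (Fin n) (Fin m) ℝ) : Prop :=
  ∃ Γ : ℝ, 0 < Γ ∧ ∀ α : Fin n → ℝ, ∀ T : ℝ, ∃ x : Fin m → ℤ,
    T ≤ supAbs x ∧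
      (⨆ j, distInt (lform Θ x j - α j)) < Γ * (supAbs x) ^ (-(m : ℝ) / (n : ℝ))

/-- `y` is a sequence of best approximations associated to the system of forms of `M`
(for the forms `ᵗL_i` of a matrix `Θ`, apply this to `M = Θᵀ`). -/
def IsBestApproxSeq {p q : ℕ} (M : Matrix (Fin p) (Fin q) ℝ) (y : ℕ → Fin q → ℤ) : Prop :=
  (∀ ν, y ν ≠ 0) ∧
  StrictMono (fun ν => supAbs (y ν)) ∧
  StrictAnti (fun ν => ⨆ i, distInt (lform M (y ν) i)) ∧
  ∀ ν, ∀ z : Fin q → ℤ, z ≠ 0 → supAbs z < supAbs (y (ν + 1)) →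
    (⨆ i, distInt (lform M (y ν) i)) ≤ ⨆ i, distInt (lform M z i)

/-- The constant `K = 2^{-(d-1)} d^{-1/2} σ`, where `σ` is the `(d-1)`-dimensional Hausdorff
measure of the central section `{z ∈ [-1,1]^d : z_1 + ... + z_d = 0}` of the cube. -/
noncomputable def Kconst (d : ℕ) : ℝ :=
  ((MeasureTheory.Measure.hausdorffMeasure ((d : ℝ) - 1) :
      MeasureTheory.Measure (EuclideanSpace ℝ (Fin d)))
    {z : EuclideanSpace ℝ (Fin d) | (∀ i, |z i| ≤ 1) ∧ ∑ i, z i = 0}).toReal /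
    (2 ^ (d - 1) * Real.sqrt d)

/-- `R_{m,n} = max_{0<r<1} r^n (1-r)^m`. -/
noncomputable def Rconst (m n : ℕ) : ℝ :=
  sSup {v : ℝ | ∃ r : ℝ, 0 < r ∧ r < 1 ∧ v = r ^ n * (1 - r) ^ m}

/-- `G_{m,n}(ε) = d^d (m^m n^n)^{d(d-1)} / (ε^d K R)^{d(d-1)}` with `d = m + n`. -/
noncomputable def Gconst (m n : ℕ) (ε : ℝ) : ℝ :=
  ((m : ℝ) + n) ^ (m + n) * ((m : ℝ) ^ m * (n : ℝ) ^ n) ^ ((m + n) * (m + n - 1)) /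
    (ε ^ (m + n) * Kconst (m + n) * Rconst m n) ^ ((m + n) * (m + n - 1))
lemma distInt_nonneg (t : ℝ) : 0 ≤ distInt t := abs_nonneg _
lemma distInt_zero : distInt 0 = 0 := by simp [distInt]
lemma distInt_le (t : ℝ) (z : ℤ) : distInt t ≤ |t - z| := round_le t z

lemma distInt_add_le (a b : ℝ) : distInt (a + b) ≤ distInt a + distInt b := by
  calc distInt (a + b) ≤ |a + b - ((round a + round b : ℤ) : ℝ)| := distInt_le _ _
    _ ≤ distInt a + distInt b := by
        push_cast
        have : a + b - ((round a : ℝ) + round b) = (a - round a) + (b - round b) := by ring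
        rw [this]
        exact abs_add_le _ _

lemma distInt_neg (t : ℝ) : distInt (-t) = distInt t := by
  apply le_antisymm
  · calc distInt (-t) ≤ |(-t) - ((-(round t) : ℤ) : ℝ)| := distInt_le _ _
      _ = distInt t := by push_cast; rw [show -t - -(round t : ℝ) = -(t - round t) by ring, abs_neg]; rfl
  · calc distInt t ≤ |t - ((-(round (-t)) : ℤ) : ℝ)| := distInt_le _ _
      _ = distInt (-t) := by push_cast; rw [show t - -(round (-t) : ℝ) = -((-t) - round (-t)) by ring, abs_neg]; rfl

lemma distInt_intMul (k : ℤ) (t : ℝ) : distInt ((k : ℝ) * t) ≤ |(k : ℝ)| * distInt t := by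
  calc distInt ((k:ℝ) * t) ≤ |(k:ℝ) * t - ((k * round t : ℤ) : ℝ)| := distInt_le _ _
    _ = |(k:ℝ)| * distInt t := by
        push_cast
        rw [show (k:ℝ) * t - k * round t = k * (t - round t) by ring, abs_mul]; rfl

lemma distInt_sum {ι : Type*} (s : Finset ι) (f : ι → ℝ) :
    distInt (∑ i ∈ s, f i) ≤ ∑ i ∈ s, distInt (f i) :=
  Finset.le_sum_of_subadditive distInt distInt_zero.le distInt_add_le s f

lemma supAbs_nonneg {k : ℕ} (x : Fin k → ℤ) : 0 ≤ supAbs x :=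
  Real.iSup_nonneg fun _ => abs_nonneg _

lemma abs_le_supAbs {k : ℕ} (x : Fin k → ℤ) (i : Fin k) : |(x i : ℝ)| ≤ supAbs x :=
  le_ciSup (f := fun i => |(x i : ℝ)|) (Set.Finite.bddAbove (Set.finite_range _)) i

lemma one_le_supAbs {k : ℕ} (x : Fin k → ℤ) (hx : x ≠ 0) : 1 ≤ supAbs x := by
  obtain ⟨i, hi⟩ := Function.ne_iff.mp hx
  have h1 : (1 : ℝ) ≤ |(x i : ℝ)| := by
    rw [← Int.cast_abs]
    exact_mod_cast Int.one_le_abs (by simpa using hi)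
  exact h1.trans (abs_le_supAbs x i)
/-- The key step of the proof of Theorem 1: under the stated choice of `ν` and the
approximation assumption on `x`, one gets `ζ_ν^m Y_{ν+1}^n ≥ ε^d r₀^n (1-r₀)^m / (m^m n^n δ)`. -/
theorem key_transference_step {m n : ℕ} (hm : 0 < m) (hn : 0 < n)
    (Θ : Matrix (Fin n) (Fin m) ℝ)
    (y : ℕ → Fin n → ℤ) (hy : IsBestApproxSeq Θ.transpose y)
    (η : Fin n → ℝ) (ε : ℝ) (hε : 0 < ε)
    (hηε : ∀ ν, ε ≤ distInt (∑ j, η j * (y ν j : ℝ)))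
    (δ : ℝ) (hδ : 0 < δ)
    (r₀ : ℝ) (hr₀ : r₀ ∈ Set.Ioo (0 : ℝ) 1)
    (hr₀max : ∀ r ∈ Set.Ioo (0 : ℝ) 1, r ^ n * (1 - r) ^ m ≤ r₀ ^ n * (1 - r₀) ^ m)
    (x : Fin m → ℤ) (ν : ℕ)
    (hX₁ : (((n : ℝ) * δ ^ ((1 : ℝ) / n) / (ε * r₀)) * supAbs (y ν)) ^ ((n : ℝ) / m) ≤
      supAbs x)
    (hX₂ : supAbs x <
      (((n : ℝ) * δ ^ ((1 : ℝ) / n) / (ε * r₀)) * supAbs (y (ν + 1))) ^ ((n : ℝ) / m))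
    (happr : (⨆ j, distInt (lform Θ x j - η j)) ≤ (δ / (supAbs x) ^ m) ^ ((1 : ℝ) / n)) :
    ε ^ (m + n) * r₀ ^ n * (1 - r₀) ^ m / ((m : ℝ) ^ m * (n : ℝ) ^ n * δ) ≤
      (⨆ i, distInt (lform Θ.transpose (y ν) i)) ^ m * (supAbs (y (ν + 1))) ^ n := by
  obtain ⟨hr₀pos, hr₀lt⟩ := hr₀
  obtain ⟨hynz, -, -, -⟩ := hy
  have h1r : (0:ℝ) < 1 - r₀ := by linarith
  have hmR : (0:ℝ) < m := by exact_mod_cast hm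
  have hnR : (0:ℝ) < n := by exact_mod_cast hn
  set D : ℝ := δ ^ ((1:ℝ)/n) with hD
  have hDpos : 0 < D := Real.rpow_pos_of_pos hδ _
  set R₀ : ℝ := (n : ℝ) * D / (ε * r₀) with hR₀
  have hR₀pos : 0 < R₀ := by positivity
  set X := supAbs x with hXdef
  set Y := supAbs (y ν) with hYdef
  set Y' := supAbs (y (ν+1)) with hY'def
  set ζ := ⨆ i, distInt (lform Θ.transpose (y ν) i) with hζdef
  set E := ⨆ j, distInt (lform Θ x j - η j) with hEdef
  have hζ0 : 0 ≤ ζ := Real.iSup_nonneg fun _ => distInt_nonneg _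
  have hE0 : 0 ≤ E := Real.iSup_nonneg fun _ => distInt_nonneg _
  have hY1 : (1:ℝ) ≤ Y := one_le_supAbs _ (hynz ν)
  have hY'1 : (1:ℝ) ≤ Y' := one_le_supAbs _ (hynz (ν+1))
  have hYpos : 0 < Y := lt_of_lt_of_le one_pos hY1
  have hY'pos : 0 < Y' := lt_of_lt_of_le one_pos hY'1
  have hXpos : 0 < X :=
    lt_of_lt_of_le (Real.rpow_pos_of_pos (mul_pos hR₀pos hYpos) _) hX₁
  have hPpos : 0 < X ^ ((m:ℝ)/n) := Real.rpow_pos_of_pos hXpos _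
  have hexp : ((n:ℝ)/m) * ((m:ℝ)/n) = 1 := by field_simp
  have hP1 : R₀ * Y ≤ X ^ ((m:ℝ)/n) := by
    have h := Real.rpow_le_rpow (Real.rpow_pos_of_pos (mul_pos hR₀pos hYpos) _).le hX₁
      (by positivity : (0:ℝ) ≤ (m:ℝ)/n)
    rwa [← Real.rpow_mul (mul_pos hR₀pos hYpos).le, hexp, Real.rpow_one] at h
  have hP2 : X ^ ((m:ℝ)/n) < R₀ * Y' := by
    have h := Real.rpow_lt_rpow (supAbs_nonneg x) hX₂ (by positivity : (0:ℝ) < (m:ℝ)/n)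
    rwa [← Real.rpow_mul (mul_pos hR₀pos hY'pos).le, hexp, Real.rpow_one] at h
  have hEb : E ≤ D / X ^ ((m:ℝ)/n) := by
    refine happr.trans_eq ?_
    rw [Real.div_rpow hδ.le (by positivity), ← Real.rpow_natCast X m,
      ← Real.rpow_mul hXpos.le, mul_one_div]
  -- Step A : ε ≤ n Y E + m X ζ
  have hA : ε ≤ (n:ℝ) * Y * E + (m:ℝ) * X * ζ := by
    have hswap : ∑ i, (x i:ℝ) * lform Θ.transpose (y ν) i
        = ∑ j, (y ν j:ℝ) * lform Θ x j := by
      simp only [lform, Matrix.transpose_apply, Finset.mul_sum]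
      rw [Finset.sum_comm]
      exact Finset.sum_congr rfl fun j _ => Finset.sum_congr rfl fun i _ => by ring
    have h1 : ∑ j, η j * (y ν j : ℝ) =
        (∑ j, (y ν j : ℝ) * (η j - lform Θ x j))
          + ∑ i, (x i : ℝ) * lform Θ.transpose (y ν) i := by
      rw [hswap, ← Finset.sum_add_distrib]
      exact Finset.sum_congr rfl fun j _ => by ring
    calc ε ≤ distInt (∑ j, η j * (y ν j:ℝ)) := hηε ν
      _ ≤ distInt (∑ j, (y ν j:ℝ) * (η j - lform Θ x j))
          + distInt (∑ i, (x i:ℝ) * lform Θ.transpose (y ν) i) := by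
          rw [h1]; exact distInt_add_le _ _
      _ ≤ (∑ _j : Fin n, Y * E) + ∑ _i : Fin m, X * ζ := by
          apply add_le_add
          · refine (distInt_sum _ _).trans (Finset.sum_le_sum fun j _ => ?_)
            refine (distInt_intMul _ _).trans ?_
            have h4 : distInt (η j - lform Θ x j) ≤ E := by
              rw [show η j - lform Θ x j = -(lform Θ x j - η j) by ring, distInt_neg]
              exact le_ciSup (f := fun j => distInt (lform Θ x j - η j))
                (Set.Finite.bddAbove (Set.finite_range _)) j
            exact mul_le_mul (abs_le_supAbs _ j) h4 (distInt_nonneg _) (supAbs_nonneg _)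
          · refine (distInt_sum _ _).trans (Finset.sum_le_sum fun i _ => ?_)
            refine (distInt_intMul _ _).trans ?_
            have h4 : distInt (lform Θ.transpose (y ν) i) ≤ ζ :=
              le_ciSup (f := fun i => distInt (lform Θ.transpose (y ν) i))
                (Set.Finite.bddAbove (Set.finite_range _)) i
            exact mul_le_mul (abs_le_supAbs _ i) h4 (distInt_nonneg _) (supAbs_nonneg _)
      _ = (n:ℝ) * Y * E + (m:ℝ) * X * ζ := by
          simp [Finset.sum_const, Finset.card_univ, nsmul_eq_mul]
          ring
  have h2 : (n:ℝ) * Y * E ≤ ε * r₀ := by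
    have hYb : Y ≤ X ^ ((m:ℝ)/n) / R₀ := (le_div_iff₀ hR₀pos).mpr (by linarith)
    calc (n:ℝ) * Y * E ≤ (n:ℝ) * (X ^ ((m:ℝ)/n) / R₀) * (D / X ^ ((m:ℝ)/n)) := by
          refine mul_le_mul (mul_le_mul_of_nonneg_left hYb hnR.le) hEb hE0 ?_
          exact mul_nonneg hnR.le (div_nonneg hPpos.le hR₀pos.le)
      _ = ε * r₀ := by
          rw [hR₀]
          field_simp
  have h3 : ε * (1 - r₀) ≤ (m:ℝ) * X * ζ := by linarith
  have hζlb : ε * (1 - r₀) / ((m:ℝ) * X) ≤ ζ :=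
    (div_le_iff₀ (by positivity)).mpr (by linarith)
  have hY'lb : X ^ ((m:ℝ)/n) / R₀ ≤ Y' :=
    (div_le_iff₀ hR₀pos).mpr (by linarith)
  have hPn : (X ^ ((m:ℝ)/n)) ^ n = X ^ m := by
    rw [← Real.rpow_natCast (X ^ ((m:ℝ)/n)) n, ← Real.rpow_mul hXpos.le,
      div_mul_cancel₀ _ hnR.ne', Real.rpow_natCast]
  have hDn : D ^ n = δ := by
    rw [hD, ← Real.rpow_natCast (δ ^ ((1:ℝ)/n)) n, ← Real.rpow_mul hδ.le,
      div_mul_cancel₀ _ hnR.ne', Real.rpow_one]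
  have key_eq : ε ^ (m + n) * r₀ ^ n * (1 - r₀) ^ m / ((m : ℝ) ^ m * (n : ℝ) ^ n * δ)
      = (ε * (1 - r₀) / ((m:ℝ) * X)) ^ m * (X ^ ((m:ℝ)/n) / R₀) ^ n := by
    rw [div_pow, div_pow, hPn, hR₀, div_pow, mul_pow, mul_pow, mul_pow, hDn]
    rw [pow_add]
    field_simp
    ring
  have hfm : (ε * (1 - r₀) / ((m:ℝ) * X)) ^ m ≤ ζ ^ m :=
    pow_le_pow_left₀ (div_nonneg (mul_nonneg hε.le h1r.le) (by positivity)) hζlb m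
  have hfn : (X ^ ((m:ℝ)/n) / R₀) ^ n ≤ Y' ^ n :=
    pow_le_pow_left₀ (div_nonneg hPpos.le hR₀pos.le) hY'lb n
  rw [key_eq]
  exact mul_le_mul hfm hfn (pow_nonneg (div_nonneg hPpos.le hR₀pos.le) n)
    (pow_nonneg hζ0 m)
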